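/- arXiv:1705.03299 — 2 statements merged into one kernel-verified Lean document; each statement's English description precedes it below -/
import Mathlib

section
/- Let V be a finite-dimensional real vector space and T₁, …, T_k commuting linear automorphisms of V such that for all nonnegative integers ν₁, …, ν_k one has (T₁^{ν₁}⋯T_k^{ν_k} - id)² = 0. Set N_i = T_i - id. Then for all real numbers ν₁, …, ν_k the operator (Σᵢ νᵢ Nᵢ)² = 0. -/
/-- Product of a `List.ofFn` where all entries except one are `1`. -/
lemma prod_ofFn_single {M : Type*} [Monoid M] :
    ∀ (n : ℕ) (f : Fin n → M) (i : Fin n), (∀ m, m ≠ i → f m = 1) →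
      (List.ofFn f).prod = f i := by
  intro n
  induction n with
  | zero => exact fun f i => i.elim0
  | succ n ih =>
    intro f i hf
    rw [List.ofFn_succ, List.prod_cons]
    rcases eq_or_ne i 0 with rfl | hi
    · have h1 : (List.ofFn (fun m => f (Fin.succ m))).prod = 1 := by
        apply List.prod_eq_one
        intro x hx
        rw [List.mem_ofFn] at hx
        obtain ⟨m, rfl⟩ := hx
        exact hf _ (Fin.succ_ne_zero m)
      rw [h1, mul_one]
    · obtain ⟨j, rfl⟩ := Fin.eq_succ_of_ne_zero hi
      rw [hf 0 (Ne.symm (Fin.succ_ne_zero j)), one_mul]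
      exact ih (fun m => f (Fin.succ m)) j
        (fun m hm => hf _ (fun hc => hm (Fin.succ_injective n hc)))

/-- Product of a `List.ofFn` where all entries except two commuting ones are `1`. -/
lemma prod_ofFn_pair {M : Type*} [Monoid M] :
    ∀ (n : ℕ) (f : Fin n → M) (i j : Fin n), i ≠ j →
      Commute (f i) (f j) → (∀ m, m ≠ i → m ≠ j → f m = 1) →
      (List.ofFn f).prod = f i * f j := by
  intro n
  induction n with
  | zero => exact fun f i => i.elim0
  | succ n ih =>
    intro f i j hij hc hf
    rw [List.ofFn_succ, List.prod_cons]
    rcases eq_or_ne i 0 with rfl | hi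
    · obtain ⟨j', rfl⟩ := Fin.eq_succ_of_ne_zero (Ne.symm hij)
      rw [prod_ofFn_single n (fun m => f (Fin.succ m)) j'
        (fun m hm => hf _ (Fin.succ_ne_zero m) (fun hc' => hm (Fin.succ_injective n hc')))]
    · rcases eq_or_ne j 0 with rfl | hj
      · obtain ⟨i', rfl⟩ := Fin.eq_succ_of_ne_zero hi
        rw [prod_ofFn_single n (fun m => f (Fin.succ m)) i'
          (fun m hm => hf _ (fun hc' => hm (Fin.succ_injective n hc')) (Fin.succ_ne_zero m))]
        exact hc.symm
      · rw [hf 0 (Ne.symm hi) (Ne.symm hj), one_mul]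
        obtain ⟨i', rfl⟩ := Fin.eq_succ_of_ne_zero hi
        obtain ⟨j', rfl⟩ := Fin.eq_succ_of_ne_zero hj
        exact ih (fun m => f (Fin.succ m)) i' j'
          (fun hc' => hij (congrArg Fin.succ hc')) hc
          (fun m h1 h2 => hf _ (fun hc' => h1 (Fin.succ_injective n hc'))
            (fun hc' => h2 (Fin.succ_injective n hc')))

lemma square_expand {R : Type*} [Ring R] (a b : R) (hab : b * a = a * b)
    (ha : a * a = 0) (hb : b * b = 0) :
    (a + b + a * b) ^ 2 = a * b + a * b := by
  have h1 : ∀ x : R, a * (a * x) = 0 := fun x => by rw [← mul_assoc, ha, zero_mul]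
  have h2 : ∀ x : R, b * (b * x) = 0 := fun x => by rw [← mul_assoc, hb, zero_mul]
  have h3 : ∀ x : R, b * (a * x) = a * (b * x) := fun x => by
    rw [← mul_assoc, hab, mul_assoc]
  simp [pow_two, mul_add, add_mul, mul_assoc, h1, h2, h3, ha, hb, hab]

/-- If `T₁, …, T_k` are commuting automorphisms of a finite-dimensional real
vector space such that `(T₁^{ν₁}⋯T_k^{ν_k} - id)² = 0` for all nonnegative integers `νᵢ`,
and `Nᵢ = Tᵢ - id`, then `(Σᵢ νᵢ Nᵢ)² = 0` for all real `νᵢ`. -/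
theorem stmt7 {V : Type*} [AddCommGroup V] [Module ℝ V] [FiniteDimensional ℝ V]
    (k : ℕ) (T : Fin k → Module.End ℝ V)
    (hunit : ∀ i, IsUnit (T i))
    (hcomm : ∀ i j, Commute (T i) (T j))
    (h : ∀ ν : Fin k → ℕ, ((List.ofFn fun i => T i ^ ν i).prod - 1) ^ 2 = 0) :
    ∀ ν : Fin k → ℝ, (∑ i, ν i • (T i - 1)) ^ 2 = 0 := by
  set N : Fin k → Module.End ℝ V := fun i => T i - 1 with hN
  have hNc : ∀ i j, N j * N i = N i * N j := fun i j =>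
    (((hcomm i j).sub_right (Commute.one_right _)).sub_left (Commute.one_left _)).symm
  have hsq : ∀ i, N i * N i = 0 := by
    intro i
    have hi := h (Pi.single i 1)
    rw [prod_ofFn_single k _ i (fun m hm => by simp [Pi.single_eq_of_ne hm])] at hi
    simpa [hN, pow_two, Pi.single_eq_same] using hi
  have hmul : ∀ i j, N i * N j = 0 := by
    intro i j
    rcases eq_or_ne i j with rfl | hij
    · exact hsq i
    · set ν₀ : Fin k → ℕ := Pi.single i 1 + Pi.single j 1 with hν₀
      have hij' := h ν₀
      have hp : (List.ofFn fun m => T m ^ ν₀ m).prod = T i * T j := by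
        have hνi : ν₀ i = 1 := by
          simp [hν₀, Pi.single_eq_same, Pi.single_eq_of_ne hij]
        have hνj : ν₀ j = 1 := by
          simp [hν₀, Pi.single_eq_same, Pi.single_eq_of_ne (Ne.symm hij)]
        rw [prod_ofFn_pair k _ i j hij (by
            rw [hνi, hνj]; simpa using (hcomm i j).pow_pow 1 1)
          (fun m h1 h2 => by
            simp [hν₀, Pi.single_eq_of_ne h1, Pi.single_eq_of_ne h2])]
        rw [hνi, hνj, pow_one, pow_one]
      rw [hp] at hij'
      have he : T i * T j - 1 = N i + N j + N i * N j := by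
        simp only [hN]; noncomm_ring
      rw [he, square_expand (N i) (N j) (hNc i j) (hsq i) (hsq j)] at hij'
      have h2 : (2 : ℝ) • (N i * N j) = 0 := by
        rw [two_smul]; exact hij'
      have := congrArg (fun x => (2⁻¹ : ℝ) • x) h2
      simpa [smul_smul] using this
  intro ν
  rw [sq, Finset.sum_mul_sum]
  refine Finset.sum_eq_zero fun i _ => Finset.sum_eq_zero fun j _ => ?_
  rw [smul_mul_assoc, mul_smul_comm, hmul i j, smul_zero, smul_zero]
end

section
/- Let U ⊂ ℂⁿ be open, w*₁, …, w*_n holomorphic functions on U, and set Zᵢⱼ = ∂w*ⱼ/∂wᵢ. Assume Z is symmetric (Zᵢⱼ = Zⱼᵢ) on U. Then √-1 ∂∂̄ φ = (√-1/2) Σᵢⱼ (Im Zᵢⱼ) dwᵢ ∧ dw̄ⱼ, where φ = (1/2) Im(Σᵢ w*ᵢ w̄ᵢ). -/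
set_option maxHeartbeats 1000000
open Metric Complex Set MeasureTheory


/-- Wirtinger derivative `∂f/∂wⱼ = (1/2)(∂f/∂xⱼ - i ∂f/∂yⱼ)` of `f : ℂⁿ → ℂ`. -/
noncomputable def wirt {n : ℕ} (j : Fin n) (f : (Fin n → ℂ) → ℂ)
    (z : Fin n → ℂ) : ℂ :=
  (1 / 2) * (fderiv ℝ f z (Pi.single j 1) -
    Complex.I * fderiv ℝ f z (Pi.single j Complex.I))

/-- Conjugate Wirtinger derivative `∂f/∂w̄ⱼ = (1/2)(∂f/∂xⱼ + i ∂f/∂yⱼ)`. -/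
noncomputable def wirtBar {n : ℕ} (j : Fin n) (f : (Fin n → ℂ) → ℂ)
    (z : Fin n → ℂ) : ℂ :=
  (1 / 2) * (fderiv ℝ f z (Pi.single j 1) +
    Complex.I * fderiv ℝ f z (Pi.single j Complex.I))

lemma keyDiff {n : ℕ} {U : Set (Fin n → ℂ)} (hU : IsOpen U)
    {f : (Fin n → ℂ) → ℂ} (hf : DifferentiableOn ℂ f U) {z : Fin n → ℂ} (hz : z ∈ U)
    (v : Fin n → ℂ) :
    DifferentiableAt ℂ (fun w => fderiv ℂ f w v) z := by
  obtain ⟨ε₀, hε₀, hball⟩ := Metric.isOpen_iff.1 hU z hz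
  set R : ℝ := ε₀ / 2 with hRdef
  have hR0 : 0 < R := by positivity
  have hRU : closedBall z R ⊆ U := by
    refine (Metric.closedBall_subset_ball ?_).trans hball
    simp only [hRdef]; linarith
  have hRU' : closedBall z (R/2) ⊆ U :=
    (Metric.closedBall_subset_closedBall (by linarith)).trans hRU
  -- bound on f
  obtain ⟨C, hC⟩ := (isCompact_closedBall z R).exists_bound_of_continuousOn
    (hf.continuousOn.mono hRU)
  have hC0 : 0 ≤ C := le_trans (norm_nonneg _) (hC z (mem_closedBall_self hR0.le))
  -- bound on fderiv
  set M : ℝ := (n : ℝ) * (C / (R/2)) with hMdef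
  have hDf : ∀ x ∈ closedBall z (R/2), ‖fderiv ℂ f x‖ ≤ M := by
    intro x hx
    have hxmem : ∀ (u : Fin n → ℂ), ‖u‖ ≤ 1 → ∀ lam : ℂ, ‖lam‖ ≤ R/2 →
        x + lam • u ∈ closedBall z R := by
      intro u hu lam hlam
      rw [Metric.mem_closedBall, dist_eq_norm]
      calc ‖x + lam • u - z‖ = ‖(x - z) + lam • u‖ := by ring_nf
        _ ≤ ‖x - z‖ + ‖lam • u‖ := norm_add_le _ _
        _ ≤ R/2 + R/2 * 1 := by
            gcongr
            · simpa [Metric.mem_closedBall, dist_eq_norm] using hx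
            · rw [norm_smul]; exact mul_le_mul hlam hu (norm_nonneg _) (by linarith)
        _ = R := by ring
    have key : ∀ k : Fin n, ‖fderiv ℂ f x (Pi.single k 1)‖ ≤ C / (R/2) := by
      intro k
      have hu : ‖(Pi.single k 1 : Fin n → ℂ)‖ ≤ 1 := by
        refine (pi_norm_le_iff_of_nonneg zero_le_one).2 fun m => ?_
        rcases eq_or_ne m k with h | h <;> simp [h, Pi.single_apply]
      set g : ℂ → ℂ := fun lam => f (x + lam • (Pi.single k 1 : Fin n → ℂ)) with hg
      have hmapball : ∀ lam ∈ closedBall (0:ℂ) (R/2), x + lam • (Pi.single k 1 : Fin n → ℂ) ∈ closedBall z R := by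
        intro lam hlam
        exact hxmem _ hu lam (by simpa [Metric.mem_closedBall, dist_eq_norm] using hlam)
      have hdc : DiffContOnCl ℂ g (ball (0:ℂ) (R/2)) := by
        constructor
        · intro lam hlam
          have hmem : x + lam • (Pi.single k 1 : Fin n → ℂ) ∈ U :=
            hRU (hmapball lam (ball_subset_closedBall hlam))
          have := ((hf.differentiableAt (hU.mem_nhds hmem)).comp lam
            ((differentiableAt_id.smul_const _).const_add x))
          exact (by simpa [Function.comp_def] using this : DifferentiableAt ℂ g lam).differentiableWithinAt
        · refine ContinuousOn.mono ?_ closure_ball_subset_closedBall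
          refine (hf.continuousOn.mono hRU).comp ?_ hmapball
          exact (continuous_const.add (continuous_id.smul continuous_const)).continuousOn
      have hder : HasDerivAt g (fderiv ℂ f x (Pi.single k 1)) 0 := by
        have hx' : x ∈ U := hRU' hx
        have h1 : HasDerivAt (fun lam : ℂ => x + lam • (Pi.single k 1 : Fin n → ℂ))
            (Pi.single k 1) 0 := by
          simpa using ((hasDerivAt_id (0:ℂ)).smul_const (Pi.single k 1 : Fin n → ℂ)).const_add x
        have h2 : HasFDerivAt f (fderiv ℂ f x) (x + (0:ℂ) • (Pi.single k 1 : Fin n → ℂ)) := by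
          simpa using (hf.differentiableAt (hU.mem_nhds hx')).hasFDerivAt
        have := h2.comp_hasDerivAt 0 h1
        simpa [Function.comp_def] using this
      have hb := Complex.norm_deriv_le_of_forall_mem_sphere_norm_le (by positivity : (0:ℝ) < R/2)
        hdc (fun lam hlam => hC _ (hmapball lam (sphere_subset_closedBall hlam)))
      rwa [hder.deriv] at hb
    refine ContinuousLinearMap.opNorm_le_bound _ (by positivity) fun u => ?_
    have hu : u = ∑ k, u k • (Pi.single k 1 : Fin n → ℂ) := by
      funext m
      simp [Pi.single_apply, Finset.sum_apply]
    calc ‖fderiv ℂ f x u‖ = ‖∑ k, u k • fderiv ℂ f x (Pi.single k 1)‖ := by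
          conv_lhs => rw [hu]
          rw [map_sum]
          simp
      _ ≤ ∑ k, ‖u k • fderiv ℂ f x (Pi.single k 1)‖ := norm_sum_le _ _
      _ ≤ ∑ _k : Fin n, ‖u‖ * (C / (R/2)) := by
          refine Finset.sum_le_sum fun k _ => ?_
          rw [norm_smul]
          exact mul_le_mul (norm_le_pi_norm u k) (key k) (norm_nonneg _) (norm_nonneg _)
      _ = M * ‖u‖ := by simp [hMdef]; ring
  -- radii for the circle representation
  set r : ℝ := (R/4) / (‖v‖ + 1) with hrdef
  have hr0 : 0 < r := by positivity
  have hmem : ∀ w ∈ ball z (R/4), ∀ lam : ℂ, ‖lam‖ ≤ r →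
      w + lam • v ∈ closedBall z (R/2) := by
    intro w hw lam hlam
    rw [Metric.mem_closedBall, dist_eq_norm]
    have h1 : ‖lam • v‖ ≤ R/4 := by
      rw [norm_smul]
      calc ‖lam‖ * ‖v‖ ≤ r * (‖v‖ + 1) := by
            exact mul_le_mul hlam (by linarith) (norm_nonneg _) hr0.le
        _ = R/4 := by rw [hrdef]; field_simp
    calc ‖w + lam • v - z‖ = ‖(w - z) + lam • v‖ := by ring_nf
      _ ≤ ‖w - z‖ + ‖lam • v‖ := norm_add_le _ _
      _ ≤ R/4 + R/4 := by
          gcongr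
          simpa [Metric.mem_ball, dist_eq_norm] using (le_of_lt (Metric.mem_ball.1 hw))
      _ = R/2 := by ring
  have habs : ∀ θ : ℝ, ‖circleMap 0 r θ‖ = r := by
    intro θ
    simpa [abs_of_pos hr0] using norm_circleMap_zero r θ
  have hcm0 : ∀ θ : ℝ, circleMap 0 r θ ≠ 0 := fun θ => circleMap_ne_center hr0.ne'
  set s : ℝ → ℂ := fun θ => ((2 * Real.pi : ℝ) : ℂ)⁻¹ * (circleMap 0 r θ)⁻¹ with hsdef
  set F : (Fin n → ℂ) → ℝ → ℂ := fun w θ => s θ * f (w + circleMap 0 r θ • v) with hFdef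
  have hsc : Continuous s := by
    apply Continuous.mul continuous_const
    exact ((continuous_circleMap 0 r).inv₀ hcm0)
  set F' : (Fin n → ℂ) → ℝ → (Fin n → ℂ) →L[ℂ] ℂ := fun w θ =>
    s θ • ((fderiv ℂ f (w + circleMap 0 r θ • v)).comp (ContinuousLinearMap.id ℂ (Fin n → ℂ)))
    with hF'def
  have hsnorm : ∀ θ : ℝ, ‖s θ‖ = (2 * Real.pi)⁻¹ * r⁻¹ := by
    intro θ
    rw [hsdef]
    simp [norm_mul, norm_inv, habs θ, abs_of_pos Real.two_pi_pos, Real.pi_pos.le]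
  have hFcont : ∀ w ∈ ball z (R/4), Continuous (F w) := by
    intro w hw
    rw [continuous_iff_continuousAt]
    intro θ
    have hmemU : w + circleMap 0 r θ • v ∈ U := hRU' (hmem w hw _ (habs θ).le)
    have hfc : ContinuousAt f (w + circleMap 0 r θ • v) :=
      (hf.differentiableAt (hU.mem_nhds hmemU)).continuousAt
    have hc1 : ContinuousAt (fun θ : ℝ => w + circleMap 0 r θ • v) θ :=
      (continuous_const.add ((continuous_circleMap 0 r).smul continuous_const)).continuousAt
    have h2 : ContinuousAt (f ∘ fun θ : ℝ => w + circleMap 0 r θ • v) θ :=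
      ContinuousAt.comp (x := θ) hfc hc1
    exact hsc.continuousAt.mul h2
  have hdiff : ∀ θ : ℝ, ∀ x ∈ ball z (R/4), HasFDerivAt (fun x => F x θ) (F' x θ) x := by
    intro θ x hx
    have hmemU : x + circleMap 0 r θ • v ∈ U := hRU' (hmem x hx _ (habs θ).le)
    have h1 : HasFDerivAt (fun x : Fin n → ℂ => x + circleMap 0 r θ • v)
        (ContinuousLinearMap.id ℂ (Fin n → ℂ)) x := (hasFDerivAt_id x).add_const _
    exact (((hf.differentiableAt (hU.mem_nhds hmemU)).hasFDerivAt.comp x h1)).const_mul (s θ)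
  have hbound : ∀ θ : ℝ, ∀ x ∈ ball z (R/4), ‖F' x θ‖ ≤ (2 * Real.pi)⁻¹ * r⁻¹ * M := by
    intro θ x hx
    simp only [hF'def, ContinuousLinearMap.comp_id]
    refine le_trans (ContinuousLinearMap.opNorm_smul_le _ _) ?_
    rw [hsnorm θ]
    exact mul_le_mul_of_nonneg_left (hDf _ (hmem x hx _ (habs θ).le)) (by positivity)
  have hFmeas : ∀ᶠ x in nhds z, MeasureTheory.AEStronglyMeasurable (F x)
      (MeasureTheory.volume.restrict (Set.uIoc (0:ℝ) (2*Real.pi))) := by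
    filter_upwards [ball_mem_nhds z (by positivity : (0:ℝ) < R/4)] with x hx
    exact (hFcont x hx).aestronglyMeasurable
  have hF'meas : MeasureTheory.AEStronglyMeasurable (F' z)
      (MeasureTheory.volume.restrict (Set.uIoc (0:ℝ) (2*Real.pi))) := by
    have m1 : StronglyMeasurable (fun θ : ℝ => fderiv ℂ f (z + circleMap 0 r θ • v)) := by
      refine Measurable.stronglyMeasurable ?_
      exact (measurable_fderiv ℂ f).comp
        (continuous_const.add ((continuous_circleMap 0 r).smul continuous_const)).measurable
    have m2 : StronglyMeasurable (F' z) := by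
      have : F' z = fun θ => s θ • fderiv ℂ f (z + circleMap 0 r θ • v) := by
        funext θ; rw [hF'def]; simp [ContinuousLinearMap.comp_id]
      rw [this]
      exact hsc.stronglyMeasurable.smul m1
    exact m2.aestronglyMeasurable
  have hmain := intervalIntegral.hasFDerivAt_integral_of_dominated_of_fderiv_le
    (μ := MeasureTheory.volume) (a := (0:ℝ)) (b := 2*Real.pi)
    (F := F) (F' := F') (x₀ := z)
    (bound := fun _ => (2 * Real.pi)⁻¹ * r⁻¹ * M)
    (ball_mem_nhds z (by positivity : (0:ℝ) < R/4)) hFmeas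
    ((hFcont z (mem_ball_self (by positivity))).intervalIntegrable 0 (2*Real.pi))
    hF'meas
    (Filter.Eventually.of_forall fun θ _ x hx => hbound θ x hx)
    (intervalIntegrable_const)
    (Filter.Eventually.of_forall fun θ _ x hx => hdiff θ x hx)
  -- Cauchy integral representation
  have hrep : ∀ w ∈ ball z (R/4), (∫ θ in (0:ℝ)..(2*Real.pi), F w θ) = fderiv ℂ f w v := by
    intro w hw
    set g : ℂ → ℂ := fun lam => f (w + lam • v) with hg
    have hmapball : ∀ lam ∈ closedBall (0:ℂ) r, w + lam • v ∈ closedBall z (R/2) := by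
      intro lam hlam
      exact hmem w hw lam (by simpa [Metric.mem_closedBall, dist_eq_norm] using hlam)
    have hdc : DiffContOnCl ℂ g (ball (0:ℂ) r) := by
      constructor
      · intro lam hlam
        have hmemU : w + lam • v ∈ U :=
          hRU' (hmapball lam (ball_subset_closedBall hlam))
        have := ((hf.differentiableAt (hU.mem_nhds hmemU)).comp lam
          ((differentiableAt_id.smul_const _).const_add w))
        exact (by simpa [Function.comp_def] using this : DifferentiableAt ℂ g lam).differentiableWithinAt
      · refine ContinuousOn.mono ?_ closure_ball_subset_closedBall
        refine (hf.continuousOn.mono hRU').comp ?_ hmapball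
        exact (continuous_const.add (continuous_id.smul continuous_const)).continuousOn
    have hder : HasDerivAt g (fderiv ℂ f w v) 0 := by
      have hwU : w ∈ U := hRU' (by simpa using hmapball 0 (by simp [hr0.le]))
      have h1 : HasDerivAt (fun lam : ℂ => w + lam • v) v 0 := by
        simpa using ((hasDerivAt_id (0:ℂ)).smul_const v).const_add w
      have h2 : HasFDerivAt f (fderiv ℂ f w) (w + (0:ℂ) • v) := by
        simpa using (hf.differentiableAt (hU.mem_nhds hwU)).hasFDerivAt
      have := h2.comp_hasDerivAt 0 h1
      simpa [Function.comp_def] using this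
    have hcauchy : deriv g 0 = (2 * (Real.pi : ℂ) * Complex.I)⁻¹ •
        circleIntegral (fun z => (z - 0) ^ (-2 : ℤ) • g z) 0 r := by
      have h := hdc.deriv_eq_smul_circleIntegral hr0
      have h2 : circleIntegral (fun z => (z - 0) ^ (-2 : ℤ) • g z) 0 r =
          circleIntegral (fun z => (1 / (z - 0) ^ 2) • g z) 0 r := by
        simp [zpow_neg]
      rw [h2, h, smul_smul, inv_mul_cancel₀ (by simp [Real.pi_ne_zero, Complex.I_ne_zero]), one_smul]
    rw [hder.deriv] at hcauchy
    rw [hcauchy]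
    rw [circleIntegral]
    simp only [deriv_circleMap, sub_zero]
    rw [← intervalIntegral.integral_smul]
    refine intervalIntegral.integral_congr fun θ _ => ?_
    have hc := hcm0 θ
    show ((2 * Real.pi : ℝ) : ℂ)⁻¹ * (circleMap 0 r θ)⁻¹ * f (w + circleMap 0 r θ • v) =
      (2 * (Real.pi : ℂ) * Complex.I)⁻¹ •
        ((circleMap 0 r θ * Complex.I) • ((circleMap 0 r θ) ^ (-2 : ℤ) • f (w + circleMap 0 r θ • v)))
    have hc := hcm0 θ
    have hpi : ((Real.pi : ℝ) : ℂ) ≠ 0 := Complex.ofReal_ne_zero.2 Real.pi_ne_zero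
    simp only [smul_eq_mul, zpow_neg, push_cast]
    rw [zpow_two]
    field_simp
  have heq : (fun w => ∫ θ in (0:ℝ)..(2*Real.pi), F w θ) =ᶠ[nhds z]
      (fun w => fderiv ℂ f w v) := by
    filter_upwards [ball_mem_nhds z (by positivity : (0:ℝ) < R/4)] with w hw using hrep w hw
  exact (Filter.EventuallyEq.differentiableAt_iff heq).1 hmain.differentiableAt

lemma single_eq_smul {n : ℕ} (k : Fin n) (c : ℂ) :
    (Pi.single k c : Fin n → ℂ) = c • (Pi.single k 1 : Fin n → ℂ) := by
  funext m
  rcases eq_or_ne m k with h | h <;> simp [h, Pi.single_apply]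

lemma wirt_hasFDerivAt {n : ℕ} {g : (Fin n → ℂ) → ℂ} {L : (Fin n → ℂ) →L[ℝ] ℂ}
    {z : Fin n → ℂ} (h : HasFDerivAt g L z) (i : Fin n) :
    wirt i g z = (1/2) * (L (Pi.single i 1) - Complex.I * L (Pi.single i Complex.I)) := by
  unfold wirt; rw [h.fderiv]

lemma wirtBar_hasFDerivAt {n : ℕ} {g : (Fin n → ℂ) → ℂ} {L : (Fin n → ℂ) →L[ℝ] ℂ}
    {z : Fin n → ℂ} (h : HasFDerivAt g L z) (i : Fin n) :
    wirtBar i g z = (1/2) * (L (Pi.single i 1) + Complex.I * L (Pi.single i Complex.I)) := by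
  unfold wirtBar; rw [h.fderiv]

lemma wirt_eq_of_diff {n : ℕ} {f : (Fin n → ℂ) → ℂ} {z : Fin n → ℂ}
    (h : DifferentiableAt ℂ f z) (i : Fin n) :
    wirt i f z = fderiv ℂ f z (Pi.single i 1) := by
  unfold wirt
  rw [h.fderiv_restrictScalars ℝ]
  simp only [ContinuousLinearMap.coe_restrictScalars']
  rw [single_eq_smul i Complex.I, _root_.map_smul]
  set d := fderiv ℂ f z (Pi.single i 1)
  simp only [smul_eq_mul]
  linear_combination (-d/2) * Complex.I_sq

lemma step1 {n : ℕ} {U : Set (Fin n → ℂ)} (hU : IsOpen U)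
    (wstar : Fin n → (Fin n → ℂ) → ℂ)
    (hhol : ∀ j, DifferentiableOn ℂ (wstar j) U)
    (φ : (Fin n → ℂ) → ℝ)
    (hφ : ∀ z, φ z = (1 / 2) * (∑ i, wstar i z * (starRingEnd ℂ) (z i)).im)
    (j : Fin n) {w : Fin n → ℂ} (hw : w ∈ U) :
    wirtBar j (fun w => ((φ w : ℝ) : ℂ)) w =
      Complex.I/4 * ((∑ k, (starRingEnd ℂ) (fderiv ℂ (wstar k) w (Pi.single j 1)) * w k)
        - wstar j w) := by
  have hd : ∀ k, DifferentiableAt ℂ (wstar k) w :=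
    fun k => (hhol k).differentiableAt (hU.mem_nhds hw)
  set Dk : Fin n → (Fin n → ℂ) →L[ℝ] ℂ := fun k =>
    (fderiv ℂ (wstar k) w).restrictScalars ℝ with hDkdef
  set Ck : Fin n → (Fin n → ℂ) →L[ℝ] ℂ := fun k =>
    (Complex.conjCLE.toContinuousLinearMap).comp
      (ContinuousLinearMap.proj (R := ℝ) (φ := fun _ : Fin n => ℂ) k) with hCkdef
  set LF : (Fin n → ℂ) →L[ℝ] ℂ :=
    ∑ k, ((wstar k w) • Ck k + ((starRingEnd ℂ) (w k)) • Dk k) with hLFdef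
  have hF : HasFDerivAt (fun w : Fin n → ℂ => ∑ k, wstar k w * (starRingEnd ℂ) (w k)) LF w := by
    refine HasFDerivAt.fun_sum fun k _ => ?_
    have h1 : HasFDerivAt (fun w : Fin n → ℂ => (starRingEnd ℂ) (w k)) (Ck k) w := by
      have hp : HasFDerivAt (fun w : Fin n → ℂ => w k)
          (ContinuousLinearMap.proj (R := ℝ) (φ := fun _ : Fin n => ℂ) k) w :=
        (ContinuousLinearMap.proj (R := ℝ) (φ := fun _ : Fin n => ℂ) k).hasFDerivAt
      have := (Complex.conjCLE.toContinuousLinearMap).hasFDerivAt.comp w hp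
      simpa [Function.comp_def] using this
    exact ((hd k).hasFDerivAt.restrictScalars ℝ).mul h1
  set L : (Fin n → ℂ) →L[ℝ] ℂ :=
    Complex.ofRealCLM.comp ((1/2 : ℝ) • (Complex.imCLM.comp LF)) with hLdef
  have hφC : HasFDerivAt (fun w => ((φ w : ℝ) : ℂ)) L w := by
    have h1 := Complex.imCLM.hasFDerivAt.comp w hF
    have h2 := h1.const_smul (1/2 : ℝ)
    have h3 := Complex.ofRealCLM.hasFDerivAt.comp w h2
    have hfun : (fun w => ((φ w : ℝ) : ℂ)) = fun w =>
        Complex.ofRealCLM ((1/2 : ℝ) • Complex.imCLM (∑ k, wstar k w * (starRingEnd ℂ) (w k))) := by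
      funext u
      rw [hφ u]
      simp [smul_eq_mul]
    rw [hfun]
    exact h3
  rw [wirtBar_hasFDerivAt hφC j]
  have hLF : ∀ c : ℂ, LF (Pi.single j c) =
      wstar j w * (starRingEnd ℂ) c +
        c * ∑ k, (starRingEnd ℂ) (w k) * fderiv ℂ (wstar k) w (Pi.single j 1) := by
    intro c
    rw [hLFdef]
    simp only [ContinuousLinearMap.sum_apply, ContinuousLinearMap.add_apply,
      ContinuousLinearMap.smul_apply, hCkdef, hDkdef, ContinuousLinearMap.comp_apply,
      ContinuousLinearMap.proj_apply, ContinuousLinearMap.coe_restrictScalars',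
      ContinuousLinearEquiv.coe_coe, Complex.conjCLE_apply]
    rw [Finset.sum_add_distrib]
    congr 1
    · rw [Finset.sum_eq_single j]
      · simp [smul_eq_mul]
      · intro b _ hb
        simp [Pi.single_eq_of_ne hb]
      · simp
    · rw [Finset.mul_sum]
      refine Finset.sum_congr rfl fun k _ => ?_
      rw [single_eq_smul j c, _root_.map_smul]
      simp [smul_eq_mul]
      ring
  have hL : ∀ c : ℂ, L (Pi.single j c) =
      ((((1:ℝ)/2) * (wstar j w * (starRingEnd ℂ) c +
        c * ∑ k, (starRingEnd ℂ) (w k) * fderiv ℂ (wstar k) w (Pi.single j 1)).im : ℝ) : ℂ) := by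
    intro c
    rw [hLdef]
    simp only [ContinuousLinearMap.comp_apply, ContinuousLinearMap.smul_apply,
      Complex.ofRealCLM_apply, Complex.imCLM_apply, smul_eq_mul]
    rw [hLF c]
  rw [hL 1, hL Complex.I]
  set a : ℂ := ∑ k, (starRingEnd ℂ) (w k) * fderiv ℂ (wstar k) w (Pi.single j 1) with hadef
  set b : ℂ := wstar j w with hbdef
  have hconj : (∑ k, (starRingEnd ℂ) (fderiv ℂ (wstar k) w (Pi.single j 1)) * w k)
      = (starRingEnd ℂ) a := by
    rw [hadef, map_sum]
    refine Finset.sum_congr rfl fun k _ => ?_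
    rw [map_mul]
    ring_nf
    simp
  rw [hconj]
  apply Complex.ext <;>
    simp [Complex.add_im, Complex.mul_im, Complex.mul_re, Complex.div_re, Complex.div_im] <;>
    ring

lemma lemB (a : ℂ) : Complex.I/4 * ((starRingEnd ℂ) a - a) = ((a.im/2 : ℝ) : ℂ) := by
  apply Complex.ext <;> simp [Complex.mul_re, Complex.mul_im, Complex.div_re, Complex.div_im] <;> ring

/-- Let `w*₁,…,w*_n` be holomorphic on an open `U ⊂ ℂⁿ` with
`Zᵢⱼ = ∂w*ⱼ/∂wᵢ` symmetric on `U`. Then for `φ = (1/2) Im (Σᵢ w*ᵢ w̄ᵢ)` one has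
`√-1 ∂∂̄φ = (√-1/2) Σᵢⱼ (Im Zᵢⱼ) dwᵢ ∧ dw̄ⱼ`, i.e. the coefficients satisfy
`∂²φ/∂wᵢ∂w̄ⱼ = (Im Zᵢⱼ)/2` on `U`. -/
theorem stmt14 (n : ℕ) (U : Set (Fin n → ℂ)) (hU : IsOpen U)
    (wstar : Fin n → (Fin n → ℂ) → ℂ)
    (hhol : ∀ j, DifferentiableOn ℂ (wstar j) U)
    (hZsymm : ∀ z ∈ U, ∀ i j : Fin n, wirt i (wstar j) z = wirt j (wstar i) z)
    (φ : (Fin n → ℂ) → ℝ)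
    (hφ : ∀ z, φ z = (1 / 2) * (∑ i, wstar i z * (starRingEnd ℂ) (z i)).im) :
    ∀ z ∈ U, ∀ i j : Fin n,
      wirt i (wirtBar j fun w => (φ w : ℂ)) z = ((wirt i (wstar j) z).im / 2 : ℝ) := by
  intro z hz i j
  have hdz : ∀ k, DifferentiableAt ℂ (wstar k) z :=
    fun k => (hhol k).differentiableAt (hU.mem_nhds hz)
  set q : Fin n → (Fin n → ℂ) → ℂ := fun k w => fderiv ℂ (wstar k) w (Pi.single j 1) with hqdef
  set G : (Fin n → ℂ) → ℂ := fun w =>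
    Complex.I/4 * ((∑ k, (starRingEnd ℂ) (q k w) * w k) - wstar j w) with hGdef
  -- step 2 : replace the function by G near z
  have heq : (wirtBar j fun w => (φ w : ℂ)) =ᶠ[nhds z] G := by
    filter_upwards [hU.mem_nhds hz] with w hw
    exact step1 hU wstar hhol φ hφ j hw
  have hred : wirt i (wirtBar j fun w => (φ w : ℂ)) z = wirt i G z := by
    unfold wirt
    rw [heq.fderiv_eq]
  rw [hred]
  -- differentiability of q k at z
  have hqd : ∀ k, DifferentiableAt ℂ (q k) z :=
    fun k => keyDiff hU (hhol k) hz (Pi.single j 1)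
  set Q : Fin n → (Fin n → ℂ) →L[ℝ] ℂ := fun k =>
    (fderiv ℂ (q k) z).restrictScalars ℝ with hQdef
  set Pk : Fin n → (Fin n → ℂ) →L[ℝ] ℂ := fun k =>
    ContinuousLinearMap.proj (R := ℝ) (φ := fun _ : Fin n => ℂ) k with hPkdef
  set LS : (Fin n → ℂ) →L[ℝ] ℂ :=
    ∑ k, (((starRingEnd ℂ) (q k z)) • Pk k +
      (z k) • ((Complex.conjCLE.toContinuousLinearMap).comp (Q k))) with hLSdef
  have hS : HasFDerivAt (fun w : Fin n → ℂ => ∑ k, (starRingEnd ℂ) (q k w) * w k) LS z := by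
    refine HasFDerivAt.fun_sum fun k _ => ?_
    have h1 : HasFDerivAt (fun w : Fin n → ℂ => (starRingEnd ℂ) (q k w))
        ((Complex.conjCLE.toContinuousLinearMap).comp (Q k)) z := by
      have := (Complex.conjCLE.toContinuousLinearMap).hasFDerivAt.comp z
        ((hqd k).hasFDerivAt.restrictScalars ℝ)
      simpa [Function.comp_def] using this
    have h2 : HasFDerivAt (fun w : Fin n → ℂ => w k) (Pk k) z :=
      (ContinuousLinearMap.proj (R := ℝ) (φ := fun _ : Fin n => ℂ) k).hasFDerivAt
    exact h1.mul h2
  set LG : (Fin n → ℂ) →L[ℝ] ℂ :=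
    (Complex.I/4) • (LS - (fderiv ℂ (wstar j) z).restrictScalars ℝ) with hLGdef
  have hG' : HasFDerivAt G LG z := by
    have := (hS.sub ((hdz j).hasFDerivAt.restrictScalars ℝ)).const_mul (Complex.I/4)
    exact this
  rw [wirt_hasFDerivAt hG' i]
  -- evaluate
  have hLS : ∀ c : ℂ, LS (Pi.single i c) =
      (starRingEnd ℂ) (q i z) * c +
        (starRingEnd ℂ) c * ∑ k, z k * (starRingEnd ℂ) (fderiv ℂ (q k) z (Pi.single i 1)) := by
    intro c
    rw [hLSdef]
    simp only [ContinuousLinearMap.sum_apply, ContinuousLinearMap.add_apply,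
      ContinuousLinearMap.smul_apply, hPkdef, ContinuousLinearMap.comp_apply,
      ContinuousLinearMap.proj_apply, hQdef, ContinuousLinearMap.coe_restrictScalars',
      ContinuousLinearEquiv.coe_coe, Complex.conjCLE_apply]
    rw [Finset.sum_add_distrib]
    congr 1
    · rw [Finset.sum_eq_single i]
      · simp [smul_eq_mul]
      · intro b _ hb
        simp [Pi.single_eq_of_ne hb]
      · simp
    · rw [Finset.mul_sum]
      refine Finset.sum_congr rfl fun k _ => ?_
      rw [single_eq_smul i c, _root_.map_smul]
      simp [smul_eq_mul]
      ring
  have hLG : ∀ c : ℂ, LG (Pi.single i c) =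
      Complex.I/4 * ((starRingEnd ℂ) (q i z) * c +
        (starRingEnd ℂ) c * ∑ k, z k * (starRingEnd ℂ) (fderiv ℂ (q k) z (Pi.single i 1))
        - fderiv ℂ (wstar j) z (Pi.single i c)) := by
    intro c
    rw [hLGdef]
    simp only [ContinuousLinearMap.smul_apply, ContinuousLinearMap.sub_apply,
      ContinuousLinearMap.coe_restrictScalars', smul_eq_mul]
    rw [hLS c]
  rw [hLG 1, hLG Complex.I]
  have hZI : fderiv ℂ (wstar j) z (Pi.single i Complex.I) =
      Complex.I * fderiv ℂ (wstar j) z (Pi.single i 1) := by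
    rw [single_eq_smul i Complex.I, _root_.map_smul, smul_eq_mul]
  rw [hZI]
  -- identify q i z with wirt i (wstar j) z via symmetry
  have hqiz : q i z = fderiv ℂ (wstar j) z (Pi.single i 1) := by
    simp only [hqdef]
    have h1 : fderiv ℂ (wstar i) z (Pi.single j 1) = wirt j (wstar i) z :=
      (wirt_eq_of_diff (hdz i) j).symm
    have h2 := hZsymm z hz i j
    rw [h1, ← h2, wirt_eq_of_diff (hdz j) i]
  rw [hqiz]
  rw [wirt_eq_of_diff (hdz j) i]
  set Z : ℂ := fderiv ℂ (wstar j) z (Pi.single i 1) with hZdef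
  set X : ℂ := ∑ k, z k * (starRingEnd ℂ) (fderiv ℂ (q k) z (Pi.single i 1)) with hXdef
  rw [← lemB Z]
  simp only [map_one, Complex.conj_I, mul_one]
  linear_combination (-(Complex.I/8) * ((starRingEnd ℂ) Z - X - Z)) * Complex.I_sq
end
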